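/- arXiv:1107.4260 — 5 statements merged into one kernel-verified Lean document; each statement's English description precedes it below -/
import Mathlib

section
/- Let V be a finite-dimensional real inner product space and Ψ : V × V → V a bilinear alternating map such that Ψ(X,Y) ∈ span{X,Y} for all X,Y ∈ V. Then there exists p ∈ V such that Ψ(X,Y) = ⟨p,X⟩Y − ⟨p,Y⟩X for all X,Y ∈ V. -/
open scoped RealInnerProductSpace

section Aux

variable {V : Type*} [NormedAddCommGroup V] [InnerProductSpace ℝ V]

lemma aux_scaled {Y Z : V} {t : ℝ} (ht : t ≠ 0) (h : t • Y = Z) :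
    Y = t⁻¹ • Z := by
  rw [← h, smul_smul, inv_mul_cancel₀ ht, one_smul]

/-- pair independence from non-membership -/
lemma aux_pair {X Y : V} (hX : X ≠ 0) (hY : Y ∉ Submodule.span ℝ ({X} : Set V))
    {s t : ℝ} (h : s • X + t • Y = 0) : s = 0 ∧ t = 0 := by
  rcases eq_or_ne t 0 with ht | ht
  · subst ht
    simp only [zero_smul, add_zero, smul_eq_zero] at h
    rcases h with h | h
    · exact ⟨h, rfl⟩
    · exact absurd h hX
  · exfalso
    apply hY
    have h1 : t • Y = (-s) • X := by
      rw [eq_neg_of_add_eq_zero_right h, neg_smul]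
    rw [aux_scaled ht h1, smul_smul]
    exact Submodule.smul_mem _ _ (Submodule.mem_span_singleton_self X)

/-- triple independence -/
lemma aux_triple {X Y₀ Y : V} (hX : X ≠ 0)
    (hY₀ : Y₀ ∉ Submodule.span ℝ ({X} : Set V))
    (hY : ¬∃ u v : ℝ, u • X + v • Y₀ = Y)
    {a b c : ℝ} (h : a • X + b • Y₀ + c • Y = 0) : a = 0 ∧ b = 0 ∧ c = 0 := by
  rcases eq_or_ne c 0 with hc | hc
  · subst hc
    rw [zero_smul, add_zero] at h
    obtain ⟨ha, hb⟩ := aux_pair hX hY₀ h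
    exact ⟨ha, hb, rfl⟩
  · exfalso
    apply hY
    have h1 : c • Y = (-a) • X + (-b) • Y₀ := by
      have := eq_neg_of_add_eq_zero_right h
      rw [this, neg_add, neg_smul, neg_smul]
    refine ⟨c⁻¹ * (-a), c⁻¹ * (-b), ?_⟩
    rw [aux_scaled hc h1, smul_add, smul_smul, smul_smul]

end Aux

/-- If `Ψ` is a bilinear alternating map on a finite-dimensional real inner product
space `V` with `Ψ X Y ∈ span {X, Y}` for all `X Y`, then there is `p ∈ V` with
`Ψ X Y = ⟨p,X⟩ Y − ⟨p,Y⟩ X`. -/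
theorem stmt0 {V : Type*} [NormedAddCommGroup V] [InnerProductSpace ℝ V]
    [FiniteDimensional ℝ V]
    (Ψ : V →ₗ[ℝ] V →ₗ[ℝ] V)
    (halt : ∀ X : V, Ψ X X = 0)
    (hspan : ∀ X Y : V, Ψ X Y ∈ Submodule.span ℝ ({X, Y} : Set V)) :
    ∃ p : V, ∀ X Y : V, Ψ X Y = ⟪p, X⟫ • Y - ⟪p, Y⟫ • X := by
  -- antisymmetry
  have hanti : ∀ X Y : V, Ψ Y X = - Ψ X Y := by
    intro X Y
    have h := halt (X + Y)
    simp only [map_add, LinearMap.add_apply, halt X, halt Y] at h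
    have h2 : Ψ X Y + Ψ Y X = 0 := by linear_combination (norm := abel) h
    exact eq_neg_of_add_eq_zero_right h2
  by_cases hdim : Module.finrank ℝ V ≤ 1
  -- low-dimensional case: Ψ = 0
  · refine ⟨0, fun X Y => ?_⟩
    rw [Module.finrank_le_one_iff_top_isPrincipal] at hdim
    obtain ⟨v, hv⟩ := hdim
    have hX : X ∈ Submodule.span ℝ ({v} : Set V) := by rw [← hv]; trivial
    have hY : Y ∈ Submodule.span ℝ ({v} : Set V) := by rw [← hv]; trivial
    rw [Submodule.mem_span_singleton] at hX hY
    obtain ⟨a, ha⟩ := hX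
    obtain ⟨b, hb⟩ := hY
    simp [← ha, ← hb, map_smul, LinearMap.smul_apply, halt, smul_comm a b]
  push_neg at hdim
  -- every singleton span is proper
  have hproper : ∀ X : V, ∃ Y : V, Y ∉ Submodule.span ℝ ({X} : Set V) := by
    intro X
    by_contra hc
    push_neg at hc
    have htop : Submodule.span ℝ ({X} : Set V) = ⊤ := by
      rw [Submodule.eq_top_iff']; exact hc
    rcases eq_or_ne X 0 with rfl | hX
    · rw [Submodule.span_zero_singleton] at htop
      have h0 : Module.finrank ℝ V = 0 := by
        have := finrank_bot ℝ V
        rw [htop, finrank_top] at this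
        omega
      omega
    · have h1 := finrank_span_singleton (K := ℝ) hX
      rw [htop, finrank_top] at h1
      omega
  -- key property
  have hex : ∀ X : V, ∃ c : ℝ, ∀ Y : V, ∃ r : ℝ, Ψ X Y = c • Y + r • X := by
    intro X
    rcases eq_or_ne X 0 with rfl | hX
    · exact ⟨0, fun Y => ⟨0, by simp⟩⟩
    obtain ⟨Y₀, hY₀⟩ := hproper X
    obtain ⟨s, c, hsc⟩ := Submodule.mem_span_pair.mp (hspan X Y₀)
    refine ⟨c, fun Y => ?_⟩
    by_cases hY : Y ∈ Submodule.span ℝ ({X} : Set V)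
    · rw [Submodule.mem_span_singleton] at hY
      obtain ⟨u, rfl⟩ := hY
      refine ⟨-(c * u), ?_⟩
      simp only [map_smul, halt, smul_zero, smul_smul, neg_smul]
      rw [mul_comm c u, ← smul_smul]
      abel
    · obtain ⟨s', a, hsa⟩ := Submodule.mem_span_pair.mp (hspan X Y)
      suffices hac : a = c by
        exact ⟨s', by rw [← hsa, hac, add_comm]⟩
      by_cases hmem : ∃ u v : ℝ, u • X + v • Y₀ = Y
      · obtain ⟨u, v, huv⟩ := hmem
        have hv : v ≠ 0 := by
          rintro rfl
          apply hY
          rw [← huv, zero_smul, add_zero]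
          exact Submodule.smul_mem _ _ (Submodule.mem_span_singleton_self X)
        have h1 : Ψ X Y = (v * s) • X + (v * c) • Y₀ := by
          conv_lhs => rw [← huv]
          simp only [map_add, map_smul, halt, smul_zero, zero_add, ← hsc]
          rw [smul_add, smul_smul, smul_smul]
        have h3 : (v * s - (s' + a * u)) • X + (v * c - a * v) • Y₀ = 0 := by
          have h2 : Ψ X Y = (s' + a * u) • X + (a * v) • Y₀ := by
            conv_lhs => rw [← hsa]
            rw [← huv, smul_add, smul_smul, smul_smul, add_smul]
            abel
          rw [sub_smul, sub_smul, h1] at *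
          linear_combination (norm := module) h1.symm.trans h2
        have hvc := (aux_pair hX hY₀ h3).2
        have : v * a = v * c := by linarith [hvc]
        exact mul_left_cancel₀ hv this
      · obtain ⟨s'', a'', hsa''⟩ := Submodule.mem_span_pair.mp (hspan X (Y₀ + Y))
        have h1 : Ψ X (Y₀ + Y) = (s + s') • X + c • Y₀ + a • Y := by
          rw [map_add, ← hsc, ← hsa, add_smul]; abel
        have h2 : Ψ X (Y₀ + Y) = s'' • X + a'' • Y₀ + a'' • Y := by
          rw [← hsa'', smul_add]; abel
        have h3 : (s + s' - s'') • X + (c - a'') • Y₀ + (a - a'') • Y = 0 := by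
          rw [sub_smul, sub_smul, sub_smul]
          linear_combination (norm := module) h1.symm.trans h2
        obtain ⟨_, hb, hc⟩ := aux_triple hX hY₀ hmem h3
        linarith
  -- choose c
  choose c hc using hex
  -- uniqueness
  have huniq : ∀ (X : V) (c' : ℝ), (∀ Y : V, ∃ r : ℝ, Ψ X Y = c' • Y + r • X) →
      c' = c X := by
    intro X c' h'
    by_contra hne
    obtain ⟨Y, hY⟩ := hproper X
    obtain ⟨r, hr⟩ := hc X Y
    obtain ⟨r', hr'⟩ := h' Y
    have h1 : (c' - c X) • Y = (r - r') • X := by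
      rw [sub_smul, sub_smul]
      linear_combination (norm := module) hr'.symm.trans hr
    have hY' : Y ∈ Submodule.span ℝ ({X} : Set V) := by
      have hne' : c' - c X ≠ 0 := sub_ne_zero.mpr hne
      rw [aux_scaled hne' h1, smul_smul]
      rcases eq_or_ne X 0 with rfl | hX
      · rw [Submodule.mem_span_singleton] at *
        exact ⟨_, rfl⟩
      · exact Submodule.smul_mem _ _ (Submodule.mem_span_singleton_self X)
    exact hY hY'
  -- homogeneity
  have hhom : ∀ (t : ℝ) (X : V), c (t • X) = t * c X := by
    intro t X
    refine (huniq (t • X) (t * c X) ?_).symm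
    intro Y
    obtain ⟨r, hr⟩ := hc X Y
    refine ⟨r, ?_⟩
    rw [map_smul, LinearMap.smul_apply, hr]
    module
  have hzero : c 0 = 0 := by
    have := hhom 0 0
    rwa [zero_smul, zero_mul] at this
  -- main pointwise identity
  have hmain : ∀ X Y : V, Ψ X Y = c X • Y - c Y • X := by
    intro X Y
    rcases eq_or_ne X 0 with rfl | hX
    · simp [hzero]
    by_cases hY : Y ∈ Submodule.span ℝ ({X} : Set V)
    · rw [Submodule.mem_span_singleton] at hY
      obtain ⟨t, rfl⟩ := hY
      rw [map_smul, halt, smul_zero, hhom]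
      module
    · obtain ⟨r, hr⟩ := hc X Y
      obtain ⟨u, hu⟩ := hc Y X
      have h1 : (c X + u) • Y + (r + c Y) • X = 0 := by
        have h2 : Ψ Y X = - Ψ X Y := hanti X Y
        rw [hu, hr] at h2
        rw [add_smul, add_smul]
        linear_combination (norm := module) h2
      have h1' : (r + c Y) • X + (c X + u) • Y = 0 := by
        rw [add_comm] at h1; exact h1
      have h4 := (aux_pair hX hY h1').1
      rw [hr, (by linarith : r = - c Y), neg_smul]
      abel
  -- construct p
  obtain ⟨X₀, hX₀span⟩ := hproper 0
  have hX₀ : X₀ ≠ 0 := by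
    rintro rfl
    exact hX₀span (Submodule.zero_mem _)
  set p : V := (‖X₀‖ ^ 2)⁻¹ • (c X₀ • X₀ - LinearMap.adjoint (Ψ X₀) X₀) with hp
  have hnorm : ⟪X₀, X₀⟫ = ‖X₀‖ ^ 2 := real_inner_self_eq_norm_sq X₀
  have hpY : ∀ Y : V, ⟪p, Y⟫ = c Y := by
    intro Y
    rw [hp]
    rw [real_inner_smul_left, inner_sub_left, real_inner_smul_left,
      LinearMap.adjoint_inner_left, hmain X₀ Y, inner_sub_right,
      real_inner_smul_right, real_inner_smul_right, hnorm]
    have h0 : (‖X₀‖ ^ 2) ≠ 0 := pow_ne_zero 2 (norm_ne_zero_iff.mpr hX₀)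
    field_simp
    ring
  exact ⟨p, fun X Y => by rw [hpY X, hpY Y, hmain X Y]⟩
end

section
/- Let V be a real inner product space of dimension at least 4, and let Ψ : V × V → V be a bilinear alternating map. For X,Y ∈ V define the skew operator X∧Y by (X∧Y)Z = ⟨X,Z⟩Y − ⟨Y,Z⟩X. If the cyclic sum σ_{XYZ}(Ψ(X,Y)∧Z) = 0 as an operator on V for all X,Y,Z ∈ V, then Ψ = 0. -/
open scoped RealInnerProductSpace

lemma fresh_index {n : ℕ} (h : 4 ≤ n) (i j k : Fin n) :
    ∃ l : Fin n, l ≠ i ∧ l ≠ j ∧ l ≠ k := by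
  by_contra hc
  push_neg at hc
  have hsub : (Finset.univ : Finset (Fin n)) ⊆ {i, j, k} := by
    intro x _
    simp only [Finset.mem_insert, Finset.mem_singleton]
    by_contra hx
    push_neg at hx
    exact hx.2.2 (hc x hx.1 hx.2.1)
  have h1 := Finset.card_le_card hsub
  have h2 : ({i, j, k} : Finset (Fin n)).card ≤ 3 := by
    apply le_trans (Finset.card_insert_le _ _)
    have : ({j, k} : Finset (Fin n)).card ≤ 2 := by
      apply le_trans (Finset.card_insert_le _ _)
      simp
    omega
  simp only [Finset.card_univ, Fintype.card_fin] at h1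
  omega

/-- If `Ψ` is a bilinear alternating map on a real inner product space of dimension
at least `4` and the cyclic sum `σ_{XYZ} (Ψ(X,Y) ∧ Z) = 0` as an operator on `V`
(where `(X ∧ Y) Z = ⟨X,Z⟩ Y − ⟨Y,Z⟩ X`), then `Ψ = 0`. -/
theorem stmt1 {V : Type*} [NormedAddCommGroup V] [InnerProductSpace ℝ V]
    [FiniteDimensional ℝ V] (hdim : 4 ≤ Module.finrank ℝ V)
    (Ψ : V →ₗ[ℝ] V →ₗ[ℝ] V)
    (halt : ∀ X : V, Ψ X X = 0)
    (hcyc : ∀ X Y Z W : V,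
      (⟪Ψ X Y, W⟫ • Z - ⟪Z, W⟫ • Ψ X Y) +
      (⟪Ψ Y Z, W⟫ • X - ⟪X, W⟫ • Ψ Y Z) +
      (⟪Ψ Z X, W⟫ • Y - ⟪Y, W⟫ • Ψ Z X) = 0) :
    Ψ = 0 := by
  -- skew-symmetry
  have hskew : ∀ X Y : V, Ψ Y X = - Ψ X Y := by
    intro X Y
    have h2 : Ψ Y X + Ψ X Y = 0 := by
      have h := halt (X + Y)
      simp only [map_add, LinearMap.add_apply, halt] at h
      simpa using h
    exact eq_neg_of_add_eq_zero_left h2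
  -- scalar form of the cyclic identity
  have key : ∀ X Y Z W U : V,
      ⟪Ψ X Y, W⟫ * ⟪Z, U⟫ - ⟪Z, W⟫ * ⟪Ψ X Y, U⟫ +
      (⟪Ψ Y Z, W⟫ * ⟪X, U⟫ - ⟪X, W⟫ * ⟪Ψ Y Z, U⟫) +
      (⟪Ψ Z X, W⟫ * ⟪Y, U⟫ - ⟪Y, W⟫ * ⟪Ψ Z X, U⟫) = 0 := by
    intro X Y Z W U
    have h := congrArg (fun v : V => ⟪v, U⟫) (hcyc X Y Z W)
    simpa only [inner_add_left, inner_sub_left, real_inner_smul_left,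
      inner_zero_left] using h
  set n := Module.finrank ℝ V with hn
  let b : OrthonormalBasis (Fin n) ℝ V := stdOrthonormalBasis ℝ V
  have hb : ∀ i j : Fin n, ⟪b i, b j⟫ = if i = j then (1:ℝ) else 0 :=
    orthonormal_iff_ite.mp b.orthonormal
  -- Step A : T i j k = 0 for pairwise distinct i j k
  have stepA : ∀ i j k : Fin n, i ≠ j → k ≠ i → k ≠ j →
      ⟪Ψ (b i) (b j), b k⟫ = 0 := by
    intro i j k hij hki hkj
    obtain ⟨m, hmi, hmj, hmk⟩ := fresh_index hdim i j k
    have h := key (b i) (b j) (b m) (b k) (b m)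
    rw [hb m k, hb i m, hb i k, hb j m, hb j k, hb m m] at h
    simp only [if_pos rfl, if_neg hmk, if_neg (Ne.symm hmi), if_neg hki.symm,
      if_neg (Ne.symm hmj), if_neg hkj.symm, if_true] at h
    linarith
  -- Step B : ⟪Ψ (b j) (b i), b i⟫ = 0 for i ≠ j
  have stepB : ∀ i j : Fin n, i ≠ j → ⟪Ψ (b j) (b i), b i⟫ = 0 := by
    intro i j hij
    -- relation E a c : for a, c distinct from j and from each other,
    -- ⟪Ψ (b j) (b c), b c⟫ = - ⟪Ψ (b j) (b a), b a⟫
    have E : ∀ a c : Fin n, a ≠ j → c ≠ j → a ≠ c →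
        ⟪Ψ (b j) (b c), b c⟫ = - ⟪Ψ (b j) (b a), b a⟫ := by
      intro a c haj hcj hac
      have h := key (b a) (b j) (b c) (b c) (b a)
      rw [hb c a, hb a c, hb a a, hb j a, hb j c, hb c c] at h
      simp only [if_pos rfl, if_neg hac.symm, if_neg hac,
        if_neg (Ne.symm haj), if_neg (Ne.symm hcj), if_true] at h
      have hsk : ⟪Ψ (b a) (b j), b a⟫ = - ⟪Ψ (b j) (b a), b a⟫ := by
        rw [hskew (b j) (b a)]; simp
      rw [hsk] at h
      linarith
    obtain ⟨k, hki, hkj, _⟩ := fresh_index hdim i j j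
    obtain ⟨l, hli, hlj, hlk⟩ := fresh_index hdim i j k
    have e1 := E i k hij hkj (Ne.symm hki)   -- U j k = - U j i
    have e2 := E l k hlj hkj hlk
    have e3 := E i l hij hlj (Ne.symm hli)   -- U j l = - U j i
    -- from e1, e2 : U j i = U j l ; with e3 : U j l = - U j i
    linarith
  -- all components vanish
  have hT : ∀ i j k : Fin n, ⟪Ψ (b i) (b j), b k⟫ = 0 := by
    intro i j k
    by_cases hij : i = j
    · rw [hij, halt]; simp
    · by_cases hki : k = i
      · subst hki
        have : ⟪Ψ (b k) (b j), b k⟫ = - ⟪Ψ (b j) (b k), b k⟫ := by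
          rw [hskew (b j) (b k)]; simp
        rw [this, stepB k j hij]
        simp
      · by_cases hkj : k = j
        · subst hkj
          exact stepB k i hki
        · exact stepA i j k hij hki hkj
  -- conclude
  apply b.toBasis.ext
  intro i
  apply b.toBasis.ext
  intro j
  simp only [OrthonormalBasis.coe_toBasis, LinearMap.zero_apply]
  have hrepr : b.repr (Ψ (b i) (b j)) = 0 := by
    ext k
    rw [b.repr_apply_apply, real_inner_comm]
    exact hT i j k
  simpa using congrArg b.repr.symm hrepr
end

section
/- Let V be a real inner product space of dimension n ≥ 4 and let p ∈ V. If σ_{XYZ}(⟨p,X⟩ Y∧Z) = 0 as an operator on V for all X,Y,Z ∈ V, then p = 0. -/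
open scoped RealInnerProductSpace

/-- If `p` is a vector of a real inner product space of dimension `n ≥ 4` such that
the cyclic sum `σ_{XYZ} (⟨p,X⟩ Y ∧ Z) = 0` as an operator on `V` for all `X Y Z`
(where `(Y ∧ Z) W = ⟨Y,W⟩ Z − ⟨Z,W⟩ Y`), then `p = 0`. -/
theorem stmt2 {V : Type*} [NormedAddCommGroup V] [InnerProductSpace ℝ V]
    [FiniteDimensional ℝ V] (hdim : 4 ≤ Module.finrank ℝ V)
    (p : V)
    (hcyc : ∀ X Y Z W : V,
      ⟪p, X⟫ • (⟪Y, W⟫ • Z - ⟪Z, W⟫ • Y) +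
      ⟪p, Y⟫ • (⟪Z, W⟫ • X - ⟪X, W⟫ • Z) +
      ⟪p, Z⟫ • (⟪X, W⟫ • Y - ⟪Y, W⟫ • X) = 0) :
    p = 0 := by
  by_contra hp
  set K := (ℝ ∙ p)ᗮ with hK
  have hdimK : 2 ≤ Module.finrank ℝ K := by
    have h1 : Module.finrank ℝ (ℝ ∙ p) = 1 := finrank_span_singleton hp
    have h2 := Submodule.finrank_add_finrank_orthogonal (K := ℝ ∙ p) (𝕜 := ℝ)
    rw [← hK] at h2
    omega
  set b := stdOrthonormalBasis ℝ K with hb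
  have h0 : (0 : ℕ) < Module.finrank ℝ K := by omega
  have h1 : (1 : ℕ) < Module.finrank ℝ K := by omega
  set Y : V := ((b ⟨0, h0⟩ : K) : V) with hY
  set Z : V := ((b ⟨1, h1⟩ : K) : V) with hZ
  have hpY : ⟪p, Y⟫ = 0 := by
    exact (Submodule.mem_orthogonal _ _).1 (b ⟨0, h0⟩).2 p
      (Submodule.mem_span_singleton_self p)
  have hpZ : ⟪p, Z⟫ = 0 := by
    exact (Submodule.mem_orthogonal _ _).1 (b ⟨1, h1⟩).2 p
      (Submodule.mem_span_singleton_self p)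
  have hYY : ⟪Y, Y⟫ = 1 := by
    have hn : ‖Y‖ = 1 := by
      rw [hY]; rw [Submodule.norm_coe]; exact b.orthonormal.1 ⟨0, h0⟩
    rw [real_inner_self_eq_norm_sq, hn]; norm_num
  have hZY : ⟪Z, Y⟫ = 0 := by
    have := b.orthonormal.2 (i := ⟨1, h1⟩) (j := ⟨0, h0⟩) (by simp)
    rw [hY, hZ]; exact this
  have key := hcyc p Y Z Y
  rw [hpY, hpZ, hYY, hZY] at key
  simp only [zero_smul, smul_zero, add_zero, one_smul, sub_zero] at key
  have hZne : Z ≠ 0 := by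
    have := b.orthonormal.1 ⟨1, h1⟩
    intro h
    rw [hZ] at h
    rw [← Submodule.norm_coe, h, norm_zero] at this
    exact zero_ne_one this
  have hpp : ⟪p, p⟫ ≠ 0 := fun h => hp (inner_self_eq_zero.mp h)
  exact hZne (by simpa [smul_eq_zero, hpp, hp] using key)
end

section
/- Let V be a real inner product space of dimension n ≥ 2 and τ a symmetric traceless operator on V with exactly two distinct eigenvalues λ and −λ (λ ≠ 0), with eigenspaces of dimensions p and q, p + q = n. Then the kernel of the induced operator S_τ : so(V) → so(V), S_τ(T) = τT + Tτ, is exactly the span of e_s∧e_a where e_s runs over an orthonormal basis of the λ-eigenspace and e_a over an orthonormal basis of the (−λ)-eigenspace; in particular dim ker S_τ = pq. -/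
open scoped RealInnerProductSpace

/-- The skew-symmetric operator `X ∧ Y : Z ↦ ⟨X,Z⟩ Y − ⟨Y,Z⟩ X` as a linear map. -/
noncomputable def wedgeL {V : Type*} [NormedAddCommGroup V] [InnerProductSpace ℝ V]
    (X Y : V) : V →ₗ[ℝ] V where
  toFun Z := ⟪X, Z⟫ • Y - ⟪Y, Z⟫ • X
  map_add' a b := by
    simp only [inner_add_right, add_smul]
    abel
  map_smul' r a := by
    simp only [real_inner_smul_right, RingHom.id_apply, mul_smul, smul_sub]


lemma wedge_term_aux {V : Type*} [NormedAddCommGroup V] [InnerProductSpace ℝ V]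
    {n p : ℕ} (e : Fin n → V)
    (hee : ∀ i j : Fin n, ⟪e i, e j⟫ = if i = j then (1:ℝ) else 0)
    (A : V →ₗ[ℝ] V) (hA : ∀ x y : V, ⟪A x, y⟫ = - ⟪x, A y⟫)
    (k l s a : Fin n) :
    ⟪e k, (if (s:ℕ) < p ∧ p ≤ (a:ℕ) then ⟪e a, A (e s)⟫ • wedgeL (e s) (e a) else 0) (e l)⟫
    = (if s = l ∧ a = k ∧ ((l:ℕ) < p ∧ p ≤ (k:ℕ)) then ⟪e k, A (e l)⟫ else 0)
      + (if s = k ∧ a = l ∧ ((k:ℕ) < p ∧ p ≤ (l:ℕ)) then ⟪e k, A (e l)⟫ else 0) := by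
  classical
  have hwe : ∀ s a k l : Fin n, ⟪e k, wedgeL (e s) (e a) (e l)⟫ =
      (if s = l then (1:ℝ) else 0) * (if k = a then (1:ℝ) else 0)
      - (if a = l then (1:ℝ) else 0) * (if k = s then (1:ℝ) else 0) := by
    intro s a k l
    simp only [wedgeL, LinearMap.coe_mk, AddHom.coe_mk, inner_sub_right,
      real_inner_smul_right, hee]
  have hskew : ⟪e l, A (e k)⟫ = -⟪e k, A (e l)⟫ := by
    rw [real_inner_comm, hA]
  by_cases hc1 : (s:ℕ) < p ∧ p ≤ (a:ℕ)
  · obtain ⟨hs, ha⟩ := hc1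
    rw [if_pos ⟨hs, ha⟩, LinearMap.smul_apply, real_inner_smul_right, hwe]
    clear hwe hee hA
    split_ifs <;> subst_vars <;>
      first
        | ring1
        | (exfalso; omega)
        | simp_all
        | linear_combination hskew
        | linear_combination -hskew
        | (simp_all; linear_combination hskew)
        | (simp_all; linear_combination -hskew)
  · rw [if_neg hc1, LinearMap.zero_apply, inner_zero_right]
    rw [if_neg, if_neg]
    · simp
    · rintro ⟨rfl, rfl, h⟩; exact hc1 ⟨h.1, h.2⟩
    · rintro ⟨rfl, rfl, h⟩; exact hc1 ⟨h.1, h.2⟩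

/-- Let `τ` be a symmetric operator on an `n`-dimensional real inner product space
with exactly the two eigenvalues `lam ≠ 0` (on the span of `e_i`, `i < p`) and `−lam`
(on the span of `e_a`, `a ≥ p`), `p + q = n`.  Then the kernel of
`S_τ : so(V) → so(V)`, `S_τ T = τ T + T τ`, is exactly the span of the wedges
`e_s ∧ e_a` with `s < p ≤ a`, and this span has dimension `p q`. -/
theorem stmt9 {V : Type*} [NormedAddCommGroup V] [InnerProductSpace ℝ V]
    [FiniteDimensional ℝ V] {n p q : ℕ} (hpq : p + q = n)
    (hp : 0 < p) (hq : 0 < q)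
    (e : Fin n → V) (he : Orthonormal ℝ e)
    (hbasis : Submodule.span ℝ (Set.range e) = ⊤)
    (τ : V →ₗ[ℝ] V) (hτ : ∀ x y : V, ⟪τ x, y⟫ = ⟪x, τ y⟫)
    (lam : ℝ) (hlam : lam ≠ 0)
    (heig : ∀ i : Fin n, τ (e i) = (if (i : ℕ) < p then lam else -lam) • e i) :
    (∀ A : V →ₗ[ℝ] V, (∀ x y : V, ⟪A x, y⟫ = - ⟪x, A y⟫) →
      (τ ∘ₗ A + A ∘ₗ τ = 0 ↔
        A ∈ Submodule.span ℝ
          {B : V →ₗ[ℝ] V | ∃ s a : Fin n, (s : ℕ) < p ∧ p ≤ (a : ℕ) ∧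
            B = wedgeL (e s) (e a)})) ∧
    Module.finrank ℝ
      (Submodule.span ℝ
        {B : V →ₗ[ℝ] V | ∃ s a : Fin n, (s : ℕ) < p ∧ p ≤ (a : ℕ) ∧
          B = wedgeL (e s) (e a)}) = p * q := by
  classical
  have hee : ∀ i j : Fin n, ⟪e i, e j⟫ = if i = j then (1:ℝ) else 0 := fun i j =>
    orthonormal_iff_ite.mp he i j
  -- zero test
  have hzero : ∀ x : V, (∀ i, ⟪e i, x⟫ = 0) → x = 0 := by
    intro x hx
    have hxmem : x ∈ (Submodule.span ℝ (Set.range e))ᗮ := by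
      rw [Submodule.mem_orthogonal]
      intro u hu
      induction hu using Submodule.span_induction with
      | mem u hu => obtain ⟨i, rfl⟩ := hu; exact hx i
      | zero => simp
      | add u v _ _ h1 h2 => simp [inner_add_left, h1, h2]
      | smul c u _ h1 => simp [inner_smul_left, h1]
    rw [hbasis, Submodule.top_orthogonal_eq_bot] at hxmem
    simpa using hxmem
  -- matrix entries of a wedge
  have hwe : ∀ s a k l : Fin n, ⟪e k, wedgeL (e s) (e a) (e l)⟫ =
      (if s = l then (1:ℝ) else 0) * (if k = a then (1:ℝ) else 0)
      - (if a = l then (1:ℝ) else 0) * (if k = s then (1:ℝ) else 0) := by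
    intro s a k l
    simp only [wedgeL, LinearMap.coe_mk, AddHom.coe_mk, inner_sub_right,
      real_inner_smul_right, hee]
  -- generators are in the kernel
  have hgen : ∀ s a : Fin n, (s:ℕ) < p → p ≤ (a:ℕ) →
      τ ∘ₗ wedgeL (e s) (e a) + wedgeL (e s) (e a) ∘ₗ τ = 0 := by
    intro s a hs ha
    apply LinearMap.ext
    intro z
    have h1 : τ (e s) = lam • e s := by simpa [hs] using heig s
    have h2 : τ (e a) = (-lam) • e a := by simpa [Nat.not_lt.mpr ha] using heig a
    have h3 : ⟪e s, τ z⟫ = lam * ⟪e s, z⟫ := by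
      rw [← hτ, h1, real_inner_smul_left]
    have h4 : ⟪e a, τ z⟫ = (-lam) * ⟪e a, z⟫ := by
      rw [← hτ, h2, real_inner_smul_left]
    simp only [LinearMap.add_apply, LinearMap.comp_apply, wedgeL, LinearMap.coe_mk,
      AddHom.coe_mk, map_sub, map_smul, h1, h2, h3, h4, LinearMap.zero_apply]
    module
  -- entries vanish on same block for kernel elements
  have hvan : ∀ (A : V →ₗ[ℝ] V), τ ∘ₗ A + A ∘ₗ τ = 0 →
      ∀ k l : Fin n, ((k:ℕ) < p ↔ (l:ℕ) < p) → ⟪e k, A (e l)⟫ = 0 := by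
    intro A hS k l hkl
    have h0 : (τ ∘ₗ A + A ∘ₗ τ) (e l) = 0 := by rw [hS]; rfl
    have h1 : ⟪e k, τ (A (e l))⟫ + ⟪e k, A (τ (e l))⟫ = 0 := by
      have := congrArg (fun x => ⟪e k, x⟫) h0
      simpa [LinearMap.add_apply, LinearMap.comp_apply, inner_add_right] using this
    have e1 : ⟪e k, τ (A (e l))⟫ = (if (k:ℕ) < p then lam else -lam) * ⟪e k, A (e l)⟫ := by
      rw [← hτ, heig k, real_inner_smul_left]
    have e2 : ⟪e k, A (τ (e l))⟫ = (if (l:ℕ) < p then lam else -lam) * ⟪e k, A (e l)⟫ := by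
      rw [heig l, map_smul, real_inner_smul_right]
    rw [e1, e2, ← add_mul] at h1
    have hne : (if (k:ℕ) < p then lam else -lam) + (if (l:ℕ) < p then lam else -lam) ≠ 0 := by
      by_cases hk : (k:ℕ) < p
      · rw [if_pos hk, if_pos (hkl.mp hk)]
        intro h; apply hlam; linarith
      · rw [if_neg hk, if_neg (fun hl => hk (hkl.mpr hl))]
        intro h; apply hlam; linarith
    exact (mul_eq_zero.mp h1).resolve_left hne
  -- index embeddings
  have hplen : p ≤ n := by omega
  set σ : Fin p → Fin n := fun i => ⟨(i:ℕ), lt_of_lt_of_le i.2 hplen⟩ with hσ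
  set α : Fin q → Fin n := fun j => ⟨p + (j:ℕ), by have := j.2; omega⟩ with hα
  set w : Fin p × Fin q → (V →ₗ[ℝ] V) := fun ij => wedgeL (e (σ ij.1)) (e (α ij.2)) with hw
  have hset : {B : V →ₗ[ℝ] V | ∃ s a : Fin n, (s : ℕ) < p ∧ p ≤ (a : ℕ) ∧
      B = wedgeL (e s) (e a)} = Set.range w := by
    ext B
    constructor
    · rintro ⟨s, a, hs, ha, rfl⟩
      refine ⟨(⟨(s:ℕ), hs⟩, ⟨(a:ℕ) - p, by have := a.2; omega⟩), ?_⟩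
      have h1 : σ ⟨(s:ℕ), hs⟩ = s := Fin.ext rfl
      have h2 : α ⟨(a:ℕ) - p, by have := a.2; omega⟩ = a := Fin.ext (by simp [hα]; omega)
      simp [hw, h1, h2]
    · rintro ⟨⟨i, j⟩, rfl⟩
      exact ⟨σ i, α j, i.2, Nat.le_add_right p j, rfl⟩
  have hne0 : ∀ (j' : Fin q) (i' : Fin p), (if α j' = σ i' then (1:ℝ) else 0) = 0 := by
    intro j' i'
    rw [if_neg]
    intro h
    have := congrArg Fin.val h
    simp [hσ, hα] at this
    omega
  have hσσ : ∀ i i' : Fin p, (σ i' = σ i) ↔ i' = i := by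
    intro i i'; simp [hσ, Fin.ext_iff]
  have hαα : ∀ j j' : Fin q, (α j = α j') ↔ j = j' := by
    intro j j'; simp [hα, Fin.ext_iff]
  have hwli : LinearIndependent ℝ w := by
    rw [Fintype.linearIndependent_iff]
    intro g hg ij
    obtain ⟨i, j⟩ := ij
    have h0 : ⟪e (α j), (∑ x : Fin p × Fin q, g x • w x) (e (σ i))⟫ = 0 := by
      rw [hg]; simp
    rw [LinearMap.sum_apply, inner_sum] at h0
    simp only [LinearMap.smul_apply, real_inner_smul_right, hw, hwe, hne0, hσσ, hαα,
      zero_mul, mul_zero, sub_zero] at h0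
    rw [Fintype.sum_prod_type] at h0
    simpa [Finset.sum_ite_eq, Finset.sum_ite_eq', mul_ite, ite_mul] using h0
  constructor
  · intro A hA
    constructor
    · intro hS
      set A' : V →ₗ[ℝ] V := ∑ s : Fin n, ∑ a : Fin n,
        (if (s:ℕ) < p ∧ p ≤ (a:ℕ) then ⟪e a, A (e s)⟫ • wedgeL (e s) (e a) else 0) with hA'
      have hmem : A' ∈ Submodule.span ℝ {B : V →ₗ[ℝ] V | ∃ s a : Fin n, (s : ℕ) < p ∧
          p ≤ (a : ℕ) ∧ B = wedgeL (e s) (e a)} := by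
        apply Submodule.sum_mem
        intro s _
        apply Submodule.sum_mem
        intro a _
        split_ifs with h
        · exact Submodule.smul_mem _ _ (Submodule.subset_span ⟨s, a, h.1, h.2, rfl⟩)
        · exact Submodule.zero_mem _
      have hkey : ∀ k l : Fin n, ⟪e k, A' (e l)⟫ = ⟪e k, A (e l)⟫ := by
        intro k l
        have hskew : ⟪e l, A (e k)⟫ = -⟪e k, A (e l)⟫ := by
          rw [real_inner_comm, hA]
        have hterm := fun s a => wedge_term_aux (p := p) e hee A hA k l s a
        rw [hA']
        rw [LinearMap.sum_apply]
        simp only [LinearMap.sum_apply, inner_sum]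
        rw [Finset.sum_congr rfl (fun s _ => Finset.sum_congr rfl fun a _ => hterm s a)]
        simp only [Finset.sum_add_distrib, ite_and, Finset.sum_ite_eq, Finset.sum_ite_eq',
          Finset.mem_univ, if_true]
        by_cases hk : (k:ℕ) < p <;> by_cases hl : (l:ℕ) < p
        · rw [hvan A hS k l (by simp [hk, hl])]; simp [hk, hl]; try omega
        · simp [hk, hl, Nat.le_of_not_lt hl]
        · simp [hk, hl, Nat.le_of_not_lt hk]
        · rw [hvan A hS k l (by simp [hk, hl])]; simp [hk, hl]; try omega
      have hAA : A = A' := by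
        apply LinearMap.ext_on hbasis
        rintro x ⟨l, rfl⟩
        have h := hzero (A (e l) - A' (e l)) (fun k => by
          simp [inner_sub_right, hkey k l])
        exact sub_eq_zero.mp h
      rw [hAA]; exact hmem
    · intro hmem
      clear hA
      induction hmem using Submodule.span_induction with
      | mem B hB => obtain ⟨s, a, hs, ha, rfl⟩ := hB; exact hgen s a hs ha
      | zero => simp
      | add B C _ _ h1 h2 =>
        have : τ ∘ₗ (B + C) + (B + C) ∘ₗ τ
            = (τ ∘ₗ B + B ∘ₗ τ) + (τ ∘ₗ C + C ∘ₗ τ) := by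
          simp only [LinearMap.comp_add, LinearMap.add_comp]; abel
        rw [this, h1, h2, add_zero]
      | smul r B _ h1 =>
        have : τ ∘ₗ (r • B) + (r • B) ∘ₗ τ = r • (τ ∘ₗ B + B ∘ₗ τ) := by
          simp only [LinearMap.comp_smul, LinearMap.smul_comp, smul_add]
        rw [this, h1, smul_zero]
  · rw [hset, finrank_span_eq_card hwli, Fintype.card_prod, Fintype.card_fin, Fintype.card_fin]
end

section
/- In the setting of a symmetric pair g = h ⊕ m with ad-invariant inner product, the adjoint of the map ad : h → so(m), U ↦ ad_U|_m, with respect to the trace inner product ⟨A₁,A₂⟩ = Tr(A₁A₂ᵗ) on so(m) (scaled so that ⟨ad_U, X∧Y⟩ = 2⟨U,[X,Y]⟩), is twice the boundary map ∂(X∧Y) = [X,Y]. Consequently, the orthogonal complement of ad(h) in so(m) equals ker ∂. -/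
open scoped RealInnerProductSpace

lemma trace_eq_sum_inner {V : Type*} [NormedAddCommGroup V] [InnerProductSpace ℝ V]
    [FiniteDimensional ℝ V] (F : V →ₗ[ℝ] V) :
    LinearMap.trace ℝ V F = ∑ i, ⟪(stdOrthonormalBasis ℝ V) i, F ((stdOrthonormalBasis ℝ V) i)⟫ := by
  classical
  rw [LinearMap.trace_eq_matrix_trace ℝ (stdOrthonormalBasis ℝ V).toBasis, Matrix.trace]
  congr 1
  ext i
  rw [Matrix.diag_apply, LinearMap.toMatrix_apply, OrthonormalBasis.coe_toBasis,
    OrthonormalBasis.coe_toBasis_repr_apply, OrthonormalBasis.repr_apply_apply,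
    real_inner_comm]

lemma trace_comp_wedge {V : Type*} [NormedAddCommGroup V] [InnerProductSpace ℝ V]
    [FiniteDimensional ℝ V] (F : V →ₗ[ℝ] V) (X Y : V) :
    LinearMap.trace ℝ V (F ∘ₗ wedgeL X Y) = ⟪X, F Y⟫ - ⟪Y, F X⟫ := by
  rw [trace_eq_sum_inner]
  have : ∀ i, ⟪(stdOrthonormalBasis ℝ V) i, (F ∘ₗ wedgeL X Y) ((stdOrthonormalBasis ℝ V) i)⟫
      = ⟪X, (stdOrthonormalBasis ℝ V) i⟫ * ⟪(stdOrthonormalBasis ℝ V) i, F Y⟫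
        - ⟪Y, (stdOrthonormalBasis ℝ V) i⟫ * ⟪(stdOrthonormalBasis ℝ V) i, F X⟫ := by
    intro i
    simp [wedgeL, map_sub, map_smul, inner_sub_right, real_inner_smul_right]
  simp_rw [this, Finset.sum_sub_distrib]
  congr 1
  · simpa [real_inner_comm] using
      (stdOrthonormalBasis ℝ V).sum_inner_mul_inner X (F Y)
  · simpa [real_inner_comm] using
      (stdOrthonormalBasis ℝ V).sum_inner_mul_inner Y (F X)

lemma adjoint_wedge {V : Type*} [NormedAddCommGroup V] [InnerProductSpace ℝ V]
    [FiniteDimensional ℝ V] (X Y : V) :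
    LinearMap.adjoint (wedgeL X Y) = wedgeL Y X := by
  symm
  rw [LinearMap.eq_adjoint_iff]
  intro x y
  simp [wedgeL, inner_sub_left, inner_sub_right, real_inner_smul_left, real_inner_smul_right]
  ring_nf
  rw [real_inner_comm x X, real_inner_comm x Y]
  ring

/-- In the setting of a symmetric pair `g = h ⊕ m` with ad-invariant inner product
(`act U = ad_U|_m` for `U ∈ h`, `br X Y = [X, Y] ∈ h` for `X, Y ∈ m`, and
`∂ : so(m) → h` the boundary map with `∂(X ∧ Y) = [X, Y]`), with respect to the trace
inner product `⟨A₁, A₂⟩ = Tr(A₁ A₂ᵗ)` on `so(m)` one has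
`⟨ad_U, A⟩ = 2 ⟨U, ∂ A⟩` for every skew-symmetric `A` (the adjoint of `ad` is `2∂`);
consequently the orthogonal complement of `ad(h)` in `so(m)` equals `ker ∂`. -/
theorem stmt16 {V W : Type*} [NormedAddCommGroup V] [InnerProductSpace ℝ V]
    [FiniteDimensional ℝ V] [NormedAddCommGroup W] [InnerProductSpace ℝ W]
    [FiniteDimensional ℝ W]
    (br : V →ₗ[ℝ] V →ₗ[ℝ] W) (hbr : ∀ X Y : V, br X Y = - br Y X)
    (act : W →ₗ[ℝ] V →ₗ[ℝ] V)
    (hact_skew : ∀ (U : W) (x y : V), ⟪act U x, y⟫ = - ⟪x, act U y⟫)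
    (hinv : ∀ (U : W) (X Y : V), ⟪U, br X Y⟫ = ⟪act U X, Y⟫)
    (D : (V →ₗ[ℝ] V) →ₗ[ℝ] W) (hD : ∀ X Y : V, D (wedgeL X Y) = br X Y)
    (hspan : ∀ A : V →ₗ[ℝ] V, (∀ x y : V, ⟪A x, y⟫ = - ⟪x, A y⟫) →
      A ∈ Submodule.span ℝ {B : V →ₗ[ℝ] V | ∃ X Y : V, B = wedgeL X Y}) :
    (∀ (U : W) (A : V →ₗ[ℝ] V), (∀ x y : V, ⟪A x, y⟫ = - ⟪x, A y⟫) →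
      LinearMap.trace ℝ V (act U ∘ₗ LinearMap.adjoint A) = 2 * ⟪U, D A⟫) ∧
    (∀ A : V →ₗ[ℝ] V, (∀ x y : V, ⟪A x, y⟫ = - ⟪x, A y⟫) →
      ((∀ U : W, LinearMap.trace ℝ V (act U ∘ₗ LinearMap.adjoint A) = 0) ↔
        D A = 0)) := by
  have main : ∀ (U : W) (A : V →ₗ[ℝ] V), (∀ x y : V, ⟪A x, y⟫ = - ⟪x, A y⟫) →
      LinearMap.trace ℝ V (act U ∘ₗ LinearMap.adjoint A) = 2 * ⟪U, D A⟫ := by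
    intro U A hA
    have key : ∀ A ∈ Submodule.span ℝ {B : V →ₗ[ℝ] V | ∃ X Y : V, B = wedgeL X Y},
        LinearMap.trace ℝ V (act U ∘ₗ LinearMap.adjoint A) = 2 * ⟪U, D A⟫ := by
      intro A hAmem
      induction hAmem using Submodule.span_induction with
      | mem B hB =>
        obtain ⟨X, Y, rfl⟩ := hB
        rw [adjoint_wedge, trace_comp_wedge, hD, hinv U X Y]
        have h1 : ⟪Y, act U X⟫ = ⟪act U X, Y⟫ := real_inner_comm _ _
        have h2 : ⟪X, act U Y⟫ = - ⟪act U X, Y⟫ := by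
          linarith [hact_skew U X Y]
        rw [h2, h1]; ring
      | zero => simp
      | add B C _ _ hB hC =>
        rw [map_add, map_add, LinearMap.comp_add, map_add, hB, hC, inner_add_right]
        ring
      | smul r B _ hB =>
        rw [map_smul, map_smul, LinearMap.comp_smul, map_smul, inner_smul_right]
        simp only [smul_eq_mul, hB]
        ring
    exact key A (hspan A hA)
  refine ⟨main, fun A hA => ?_⟩
  constructor
  · intro h
    have := main (D A) A hA
    rw [h (D A)] at this
    have h0 : ⟪D A, D A⟫ = 0 := by linarith
    exact inner_self_eq_zero.mp h0
  · intro h U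
    rw [main U A hA, h, inner_zero_right, mul_zero]
end
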